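/- With A₁, A₂, A_M as above, the map D_{j→3-j} = I - A_{3-j}A_j⁻¹ restricts to a group isomorphism from the moiré lattice R_M = A_M ℤ² onto the lattice R_{3-j} = A_{3-j} ℤ². -/

import Mathlib

open Matrix

lemma neg_lattice_range (A : Matrix (Fin 2) (Fin 2) ℝ) :
    Set.range (fun n : Fin 2 → ℤ => (-A).mulVec (fun i => (n i : ℝ)))
      = Set.range (fun n : Fin 2 → ℤ => A.mulVec (fun i => (n i : ℝ))) := by
  have key : ∀ (A : Matrix (Fin 2) (Fin 2) ℝ) (n : Fin 2 → ℤ),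
      A.mulVec (fun i => (((-n) i : ℤ) : ℝ)) = -(A.mulVec (fun i => (n i : ℝ))) := by
    intro A n
    rw [show (fun i => (((-n) i : ℤ) : ℝ)) = -(fun i => ((n i : ℤ) : ℝ)) from
      funext fun i => by simp, Matrix.mulVec_neg]
  ext v
  constructor
  · rintro ⟨n, rfl⟩
    exact ⟨-n, by show A.mulVec _ = (-A).mulVec _; rw [key, Matrix.neg_mulVec]⟩
  · rintro ⟨n, rfl⟩
    exact ⟨-n, by show (-A).mulVec _ = A.mulVec _; rw [key, Matrix.neg_mulVec, neg_neg]⟩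

lemma aux_bijOn (D AM B : Matrix (Fin 2) (Fin 2) ℝ) (hDB : D * AM = B)
    (hD : IsUnit D.det) (RM RB : Set (Fin 2 → ℝ))
    (hRM : RM = Set.range (fun n : Fin 2 → ℤ => AM.mulVec (fun i => (n i : ℝ))))
    (hRB : RB = Set.range (fun n : Fin 2 → ℤ => B.mulVec (fun i => (n i : ℝ)))) :
    Set.BijOn (fun v => D.mulVec v) RM RB := by
  refine ⟨?_, ?_, ?_⟩
  · rintro v hv
    rw [hRM] at hv
    obtain ⟨n, rfl⟩ := hv
    rw [hRB]
    exact ⟨n, by show B.mulVec _ = D.mulVec (AM.mulVec _); rw [Matrix.mulVec_mulVec, hDB]⟩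
  · intro v _ w _ h
    have := congrArg (fun x => D⁻¹.mulVec x) h
    simpa only [Matrix.mulVec_mulVec, Matrix.nonsing_inv_mul D hD, Matrix.one_mulVec] using this
  · rintro y hy
    rw [hRB] at hy
    obtain ⟨n, rfl⟩ := hy
    refine ⟨AM.mulVec (fun i => (n i : ℝ)), ?_, ?_⟩
    · rw [hRM]; exact ⟨n, rfl⟩
    · simp only [Matrix.mulVec_mulVec, hDB]

/-- The disregistry matrix `D_{j→3-j} = 1 - A_{3-j} A_j⁻¹` restricts to a bijection
(automatically additive, hence a group isomorphism) from the moiré lattice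
`R_M = A_M ℤ²` onto `R_{3-j} = A_{3-j} ℤ²`, for j = 1, 2. -/
theorem disregistry_lattice_iso (A₁ A₂ : Matrix (Fin 2) (Fin 2) ℝ)
    (hA₁ : IsUnit A₁.det) (hA₂ : IsUnit A₂.det)
    (hM : IsUnit (A₁⁻¹ - A₂⁻¹).det) (A_M : Matrix (Fin 2) (Fin 2) ℝ)
    (hAM : A_M = (A₁⁻¹ - A₂⁻¹)⁻¹)
    (R_M R₁ R₂ : Set (Fin 2 → ℝ))
    (hRM : R_M = Set.range (fun n : Fin 2 → ℤ => A_M.mulVec (fun i => (n i : ℝ))))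
    (hR₁ : R₁ = Set.range (fun n : Fin 2 → ℤ => A₁.mulVec (fun i => (n i : ℝ))))
    (hR₂ : R₂ = Set.range (fun n : Fin 2 → ℤ => A₂.mulVec (fun i => (n i : ℝ)))) :
    Set.BijOn (fun v => (1 - A₂ * A₁⁻¹).mulVec v) R_M R₂ ∧
    Set.BijOn (fun v => (1 - A₁ * A₂⁻¹).mulVec v) R_M R₁ ∧
    (∀ v w : Fin 2 → ℝ, (1 - A₂ * A₁⁻¹).mulVec (v + w)
        = (1 - A₂ * A₁⁻¹).mulVec v + (1 - A₂ * A₁⁻¹).mulVec w) ∧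
    (∀ v w : Fin 2 → ℝ, (1 - A₁ * A₂⁻¹).mulVec (v + w)
        = (1 - A₁ * A₂⁻¹).mulVec v + (1 - A₁ * A₂⁻¹).mulVec w) := by
  have h1 : (1 - A₂ * A₁⁻¹) = -A₂ * (A₁⁻¹ - A₂⁻¹) := by
    rw [Matrix.neg_mul, Matrix.mul_sub, Matrix.mul_nonsing_inv A₂ hA₂, neg_sub]
  have h2 : (1 - A₁ * A₂⁻¹) = A₁ * (A₁⁻¹ - A₂⁻¹) := by
    rw [Matrix.mul_sub, Matrix.mul_nonsing_inv A₁ hA₁]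
  have hD1 : (1 - A₂ * A₁⁻¹) * A_M = -A₂ := by
    rw [h1, hAM, Matrix.mul_assoc, Matrix.mul_nonsing_inv _ hM, Matrix.mul_one]
  have hD2 : (1 - A₁ * A₂⁻¹) * A_M = A₁ := by
    rw [h2, hAM, Matrix.mul_assoc, Matrix.mul_nonsing_inv _ hM, Matrix.mul_one]
  have hu1 : IsUnit (1 - A₂ * A₁⁻¹).det := by
    rw [h1, Matrix.det_mul, Matrix.det_neg, Fintype.card_fin]
    simp only [neg_one_sq, one_mul]
    exact hA₂.mul hM
  have hu2 : IsUnit (1 - A₁ * A₂⁻¹).det := by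
    rw [h2, Matrix.det_mul]
    exact hA₁.mul hM
  refine ⟨?_, ?_, fun v w => Matrix.mulVec_add _ v w, fun v w => Matrix.mulVec_add _ v w⟩
  · exact aux_bijOn _ _ _ hD1 hu1 R_M R₂ hRM (by rw [hR₂, neg_lattice_range])
  · exact aux_bijOn _ _ _ hD2 hu2 R_M R₁ hRM hR₁
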